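/- arXiv:0810.5376 — 3 statements merged into one kernel-verified Lean document; each statement's English description precedes it below -/
import Mathlib

section
/- Let Λ be a group generated by a finite symmetric set A = A⁻¹, and let G be a finitely generated group equipped with a word metric dist. Let (φₙ)_{n∈ℕ} be a sequence of homomorphisms Λ → G which are pairwise non-conjugate in G, i.e. for all n ≠ m there is no g ∈ G with φₘ(h) = g φₙ(h) g⁻¹ for all h ∈ Λ. For each n set dₙ = inf_{x∈G} sup_{a∈A} dist(φₙ(a)x, x). Then lim_{n→∞} dₙ = ∞. -/
/-- The metric on the group `G` is the word metric associated with the finite generating set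
`S`: `dist g h` is the least length of a word in `S ∪ S⁻¹` representing `g⁻¹ * h`. -/
def IsWordMetric {G : Type*} [Group G] [MetricSpace G] (S : Finset G) : Prop :=
  Subgroup.closure (S : Set G) = ⊤ ∧
  ∀ g h : G, dist g h =
    ↑(sInf {n : ℕ | ∃ w : List G, w.length = n ∧ (∀ u ∈ w, u ∈ S ∨ u⁻¹ ∈ S) ∧
      g⁻¹ * h = w.prod})

private lemma finite_prods {G : Type*} [Monoid G] {T : Set G} (hT : T.Finite) :
    ∀ N : ℕ, {g : G | ∃ w : List G, w.length ≤ N ∧ (∀ u ∈ w, u ∈ T) ∧ g = w.prod}.Finite := by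
  intro N
  induction N with
  | zero =>
    apply Set.Finite.subset (Set.finite_singleton 1)
    rintro g ⟨w, hw, -, rfl⟩
    simp only [Nat.le_zero, List.length_eq_zero_iff] at hw
    simp [hw]
  | succ N ih =>
    apply Set.Finite.subset (ih.union (hT.biUnion (fun t _ => ih.image (t * ·))))
    rintro g ⟨w, hw, hmem, rfl⟩
    cases w with
    | nil => exact Or.inl ⟨[], by simp⟩
    | cons u w' =>
      refine Or.inr (Set.mem_biUnion (hmem u (by simp)) ?_)
      refine ⟨w'.prod, ⟨w', ?_, fun v hv => hmem v (by simp [hv]), rfl⟩, by simp⟩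
      simpa using Nat.succ_le_succ_iff.mp hw

private lemma ball_finite {G : Type*} [Group G] [MetricSpace G] {S : Finset G}
    (hword : IsWordMetric S) (b : ℝ) : {g : G | dist 1 g ≤ b}.Finite := by
  obtain ⟨hgen, hdist⟩ := hword
  have hT : {u : G | u ∈ S ∨ u⁻¹ ∈ S}.Finite := by
    have hsub : {u : G | u ∈ S ∨ u⁻¹ ∈ S} ⊆ ↑S ∪ (fun u : G => u⁻¹) '' ↑S := by
      rintro u (h | h)
      · exact Or.inl h
      · exact Or.inr ⟨u⁻¹, h, by simp⟩
    exact ((S.finite_toSet).union ((S.finite_toSet).image _)).subset hsub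
  apply (finite_prods hT ⌊b⌋₊).subset
  intro g hg
  have hne : {n : ℕ | ∃ w : List G, w.length = n ∧ (∀ u ∈ w, u ∈ S ∨ u⁻¹ ∈ S) ∧
      (1 : G)⁻¹ * g = w.prod}.Nonempty := by
    have hgmem : g ∈ Subgroup.closure (S : Set G) := hgen ▸ Subgroup.mem_top g
    have : g ∈ Submonoid.closure ((S : Set G) ∪ (S : Set G)⁻¹) := by
      rw [← Subgroup.closure_toSubmonoid] at *
      exact hgmem
    obtain ⟨l, hl, hprod⟩ := Submonoid.exists_list_of_mem_closure this
    refine ⟨l.length, l, rfl, fun u hu => ?_, by simp [hprod]⟩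
    rcases hl u hu with h | h
    · exact Or.inl h
    · exact Or.inr (Set.mem_inv.mp h)
  obtain ⟨w, hlen, hw, hprod⟩ := Nat.sInf_mem hne
  have hg' : dist 1 g ≤ b := hg
  rw [hdist] at hg'
  have hle : sInf {n : ℕ | ∃ w : List G, w.length = n ∧ (∀ u ∈ w, u ∈ S ∨ u⁻¹ ∈ S) ∧
      (1 : G)⁻¹ * g = w.prod} ≤ ⌊b⌋₊ := Nat.le_floor (by exact_mod_cast hg')
  exact ⟨w, hlen ▸ hle, hw, by simpa using hprod⟩

/-- Let `Λ` be a group generated by the finite symmetric set `A`, and let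
`G` be a finitely generated group with a word metric. If `(φ n)` is a sequence of
homomorphisms `Λ →* G` that are pairwise non-conjugate in `G`, then
`d n = inf_{x ∈ G} sup_{a ∈ A} dist (φ n a * x) x` tends to infinity. -/
theorem statement7 {Λ G : Type*} [Group Λ] [Group G] [MetricSpace G]
    (A : Finset Λ) (hAgen : Subgroup.closure (A : Set Λ) = ⊤)
    (hAsymm : ∀ a ∈ A, a⁻¹ ∈ A)
    (S : Finset G) (hword : IsWordMetric S)
    (φ : ℕ → (Λ →* G))
    (hnc : ∀ n k : ℕ, n ≠ k → ¬ ∃ g : G, ∀ h : Λ, φ k h = g * φ n h * g⁻¹) :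
    Filter.Tendsto (fun n : ℕ => ⨅ x : G, ⨆ a ∈ A, dist (φ n a * x) x)
      Filter.atTop Filter.atTop := by
  obtain ⟨-, hdist⟩ := id hword
  rw [Filter.tendsto_atTop]
  by_contra hcon
  push_neg at hcon
  obtain ⟨b, hb⟩ := hcon
  have hinf : {n : ℕ | (⨅ x : G, ⨆ a ∈ A, dist (φ n a * x) x) < b}.Infinite := by
    rw [← Nat.frequently_atTop_iff_infinite]
    exact hb
  -- for each bad `n`, choose a basepoint `x` moved by less than `b` by all `φ n a`
  have key : ∀ n : ℕ, (⨅ x : G, ⨆ a ∈ A, dist (φ n a * x) x) < b →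
      ∃ x : G, ∀ a ∈ A, dist (φ n a * x) x < b := by
    intro n hn
    by_contra hcon2
    push_neg at hcon2
    refine absurd hn (not_lt.mpr (le_ciInf fun x => ?_))
    obtain ⟨a, ha, hba⟩ := hcon2 x
    refine hba.trans ?_
    have hbdd : BddAbove (Set.range fun a : Λ => ⨆ _ : a ∈ A, dist (φ n a * x) x) := by
      refine (((A.finite_toSet.image fun a => dist (φ n a * x) x).insert 0).bddAbove).mono ?_
      rintro r ⟨c, rfl⟩
      show (⨆ _ : c ∈ A, dist (φ n c * x) x) ∈ _
      by_cases hc : c ∈ A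
      · rw [ciSup_pos hc]
        exact Set.mem_insert_of_mem _ ⟨c, hc, rfl⟩
      · have : IsEmpty (c ∈ A) := ⟨hc⟩
        rw [Real.iSup_of_isEmpty]
        exact Set.mem_insert _ _
    have h2 := le_ciSup hbdd a
    rw [ciSup_pos ha] at h2
    exact h2
  have hx : ∀ n : ℕ, ∃ x : G,
      (⨅ x : G, ⨆ a ∈ A, dist (φ n a * x) x) < b → ∀ a ∈ A, dist (φ n a * x) x < b := by
    intro n
    by_cases hn : (⨅ x : G, ⨆ a ∈ A, dist (φ n a * x) x) < b
    · obtain ⟨x, hx⟩ := key n hn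
      exact ⟨x, fun _ => hx⟩
    · exact ⟨1, fun h => absurd h hn⟩
  choose x hx using hx
  -- the conjugated images of generators lie in a fixed finite ball
  set B : Set G := {g : G | dist 1 g ≤ b} with hB
  have hBfin : B.Finite := ball_finite hword b
  have hmaps : Set.MapsTo (fun n => fun a : ↑A => (x n)⁻¹ * φ n a * x n)
      {n : ℕ | (⨅ x : G, ⨆ a ∈ A, dist (φ n a * x) x) < b}
      (Set.univ.pi fun _ : ↑A => B) := by
    intro n hn
    rw [Set.mem_univ_pi]
    intro a
    show (x n)⁻¹ * φ n (a : Λ) * x n ∈ B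
    have heq : dist 1 ((x n)⁻¹ * φ n (a : Λ) * x n) = dist (φ n (a : Λ) * x n) (x n) := by
      rw [dist_comm (φ n (a : Λ) * x n) (x n), hdist, hdist]
      norm_num [mul_assoc]
    show dist 1 ((x n)⁻¹ * φ n (a : Λ) * x n) ≤ b
    rw [heq]
    exact (hx n hn a a.2).le
  obtain ⟨n, hn, m, hm, hnm, hfeq⟩ := hinf.exists_ne_map_eq_of_mapsTo hmaps
    (Set.Finite.pi fun _ => hBfin)
  refine hnc n m hnm ⟨x m * (x n)⁻¹, ?_⟩
  -- the two homomorphisms agree on the generating set, hence everywhere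
  set g : G := x m * (x n)⁻¹ with hg
  have heqon : Set.EqOn (φ m) (((MulAut.conj g).toMonoidHom).comp (φ n)) (A : Set Λ) := by
    intro a ha
    have h1 : (x n)⁻¹ * φ n a * x n = (x m)⁻¹ * φ m a * x m := congrFun hfeq ⟨a, ha⟩
    show φ m a = g * φ n a * g⁻¹
    calc φ m a = x m * ((x m)⁻¹ * φ m a * x m) * (x m)⁻¹ := by group
      _ = x m * ((x n)⁻¹ * φ n a * x n) * (x m)⁻¹ := by rw [← h1]
      _ = g * φ n a * g⁻¹ := by rw [hg]; group
  have hall : φ m = ((MulAut.conj g).toMonoidHom).comp (φ n) := by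
    apply MonoidHom.eq_of_eqOn_top
    rw [← hAgen]
    exact MonoidHom.eqOn_closure heqon
  intro h
  simpa using DFunLike.congr_fun hall h
end

section
/- Let Λ be a group generated by a finite symmetric set A = A⁻¹, let G be a finitely generated group with word metric dist, and let (φₙ)_{n∈ℕ} be homomorphisms Λ → G. For each n set dₙ = inf_{x∈G} sup_{a∈A} dist(φₙ(a)x, x), and choose xₙ ∈ G realizing this infimum, i.e. dₙ = sup_{a∈A} dist(φₙ(a)xₙ, xₙ) (such xₙ exists since the word metric is integer-valued). Let ω be a nonprincipal ultrafilter on ℕ and assume lim_ω dₙ = ∞. Then the formula g · [(yₙ)] = [(φₙ(g) yₙ)] gives a well-defined action of Λ by isometries on the asymptotic cone Con_ω(G; (xₙ), (dₙ)), and this action has no global fixed point; indeed, for every point y of the cone one has sup_{a∈A} dist_cone(a · y, y) ≥ 1. -/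
/-- The pseudodistance, in the asymptotic cone `Con_ω(G; (x n), (d n))`, between the points
represented by the sequences `y` and `z`: the ω-limit of `dist (y n) (z n) / d n`. -/
noncomputable def coneDist {G : Type*} [MetricSpace G] (ω : Ultrafilter ℕ)
    (d : ℕ → ℝ) (y z : ℕ → G) : ℝ :=
  Filter.limUnder (ω : Filter ℕ) (fun n => dist (y n) (z n) / d n)

/-- The sequence `y` represents a point of the asymptotic cone `Con_ω(G; (x n), (d n))`:
its rescaled distance to the observation point is ω-essentially bounded. -/
def InCone {G : Type*} [MetricSpace G] (ω : Ultrafilter ℕ)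
    (x : ℕ → G) (d : ℕ → ℝ) (y : ℕ → G) : Prop :=
  ∃ M : ℝ, ∀ᶠ n in (ω : Filter ℕ), dist (y n) (x n) ≤ M * d n

open Filter Topology

section AuxStatement8

variable {Λ G : Type*} [Group Λ] [Group G] [MetricSpace G]

lemma aux8_le_biSup (A : Finset Λ) (f : Λ → ℝ) {a : Λ} (ha : a ∈ A) :
    f a ≤ ⨆ b ∈ A, f b := by
  have hbdd : BddAbove (Set.range fun b => ⨆ _ : b ∈ A, f b) := by
    apply (((A.image f : Finset ℝ) : Set ℝ).toFinite.insert 0).bddAbove.mono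
    rintro _ ⟨b, rfl⟩
    dsimp only
    by_cases hb : b ∈ A
    · rw [ciSup_pos hb]
      refine Set.mem_insert_of_mem _ ?_
      simp only [Finset.coe_image, Set.mem_image, Finset.mem_coe]
      exact ⟨b, hb, rfl⟩
    · haveI : IsEmpty (b ∈ A) := ⟨hb⟩
      rw [Real.iSup_of_isEmpty]
      exact Set.mem_insert _ _
  have h1 : f a = ⨆ _ : a ∈ A, f a := (ciSup_pos (f := fun _ => f a) ha).symm
  rw [h1]
  exact le_ciSup hbdd a

lemma aux8_biSup_nonneg (A : Finset Λ) (f : Λ → ℝ) (hf : ∀ a, 0 ≤ f a) :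
    0 ≤ ⨆ a ∈ A, f a :=
  Real.iSup_nonneg fun a => Real.iSup_nonneg fun _ => hf a

lemma aux8_biSup_le_max (A : Finset Λ) (hne : A.Nonempty) (f : Λ → ℝ)
    (hf : ∀ a, 0 ≤ f a) : ∃ a ∈ A, (⨆ b ∈ A, f b) ≤ f a := by
  obtain ⟨a, ha, hmax⟩ := A.exists_max_image f hne
  refine ⟨a, ha, Real.iSup_le (fun b => Real.iSup_le (fun hb => hmax b hb) (hf a)) (hf a)⟩

lemma aux8_limUnder_mem {ω : Ultrafilter ℕ} {f : ℕ → ℝ} {lo hi : ℝ}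
    (h : ∀ᶠ n in (ω : Filter ℕ), f n ∈ Set.Icc lo hi) :
    limUnder (ω : Filter ℕ) f ∈ Set.Icc lo hi := by
  have hle : (↑(ω.map f) : Filter ℝ) ≤ 𝓟 (Set.Icc lo hi) := by
    rw [Ultrafilter.coe_map, Filter.le_principal_iff, Filter.mem_map]
    exact h
  obtain ⟨c, hc, hlim⟩ := isCompact_Icc.ultrafilter_le_nhds (ω.map f) hle
  have ht : Filter.Tendsto f (ω : Filter ℕ) (𝓝 c) := by
    rwa [Ultrafilter.coe_map] at hlim
  rw [ht.limUnder_eq]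
  exact hc

lemma aux8_word_inv (S : Finset G) (hword : IsWordMetric S) (g y z : G) :
    dist (g * y) (g * z) = dist y z := by
  rw [hword.2 (g * y) (g * z), hword.2 y z]
  have h : (g * y)⁻¹ * (g * z) = y⁻¹ * z := by group
  rw [h]

lemma aux8_word_list (A : Finset Λ) (hAgen : Subgroup.closure (A : Set Λ) = ⊤)
    (hAsymm : ∀ a ∈ A, a⁻¹ ∈ A) (g : Λ) :
    ∃ l : List Λ, (∀ u ∈ l, u ∈ A) ∧ l.prod = g := by
  have hg : g ∈ Subgroup.closure (A : Set Λ) := hAgen ▸ Subgroup.mem_top g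
  have hg' : g ∈ Submonoid.closure ((A : Set Λ) ∪ (A : Set Λ)⁻¹) := by
    rw [← Subgroup.closure_toSubmonoid]
    exact hg
  obtain ⟨l, hl, hprod⟩ := Submonoid.exists_list_of_mem_closure hg'
  refine ⟨l, fun u hu => ?_, hprod⟩
  rcases hl u hu with h | h
  · exact h
  · have := hAsymm u⁻¹ h
    rwa [inv_inv] at this

end AuxStatement8

/-- Let `Λ = ⟨A⟩` with `A` finite symmetric, `G` a finitely generated group
with a word metric, `φ n : Λ →* G` homomorphisms, `d n = inf_x sup_{a ∈ A} dist (φ n a * x) x`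
realized at `x n`, and `ω` a nonprincipal ultrafilter with `lim_ω d n = ∞`. Then
`g · [(y n)] = [(φ n g * y n)]` is a well-defined isometric action of `Λ` on the asymptotic
cone `Con_ω(G; (x n), (d n))`: it preserves the cone, respects the identification of points at
cone-distance `0`, satisfies the action laws, and acts by isometries; moreover it has no
global fixed point: every point `y` of the cone satisfies
`sup_{a ∈ A} dist_cone(a · y, y) ≥ 1`. -/
theorem statement8 {Λ G : Type*} [Group Λ] [Group G] [MetricSpace G]
    (A : Finset Λ) (hAgen : Subgroup.closure (A : Set Λ) = ⊤)
    (hAsymm : ∀ a ∈ A, a⁻¹ ∈ A)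
    (S : Finset G) (hword : IsWordMetric S)
    (φ : ℕ → (Λ →* G))
    (d : ℕ → ℝ) (hd : ∀ n : ℕ, d n = ⨅ x : G, ⨆ a ∈ A, dist (φ n a * x) x)
    (x : ℕ → G) (hx : ∀ n : ℕ, d n = ⨆ a ∈ A, dist (φ n a * x n) (x n))
    (ω : Ultrafilter ℕ) (hfree : ∀ s : Set ℕ, s.Finite → s ∉ ω)
    (hdiv : Filter.Tendsto d (ω : Filter ℕ) Filter.atTop) :
    (∀ (g : Λ) (y : ℕ → G), InCone ω x d y → InCone ω x d (fun n => φ n g * y n)) ∧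
    (∀ (g : Λ) (y z : ℕ → G), InCone ω x d y → InCone ω x d z →
      coneDist ω d y z = 0 →
      coneDist ω d (fun n => φ n g * y n) (fun n => φ n g * z n) = 0) ∧
    (∀ (g h : Λ) (y : ℕ → G), InCone ω x d y →
      coneDist ω d (fun n => φ n (g * h) * y n) (fun n => φ n g * (φ n h * y n)) = 0) ∧
    (∀ y : ℕ → G, InCone ω x d y → coneDist ω d (fun n => φ n 1 * y n) y = 0) ∧
    (∀ (g : Λ) (y z : ℕ → G), InCone ω x d y → InCone ω x d z →
      coneDist ω d (fun n => φ n g * y n) (fun n => φ n g * z n) = coneDist ω d y z) ∧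
    (∀ y : ℕ → G, InCone ω x d y →
      1 ≤ ⨆ a ∈ A, coneDist ω d (fun n => φ n a * y n) y) := by
  have hinv : ∀ g y z : G, dist (g * y) (g * z) = dist y z := aux8_word_inv S hword
  have hd0 : ∀ n, 0 ≤ d n := fun n => by
    rw [hx n]; exact aux8_biSup_nonneg A _ fun a => dist_nonneg
  have hA_le : ∀ n, ∀ a ∈ A, dist (φ n a * x n) (x n) ≤ d n := fun n a ha => by
    rw [hx n]; exact aux8_le_biSup A (fun b => dist (φ n b * x n) (x n)) ha
  -- word-length bound for each g
  have hC : ∀ g : Λ, ∃ C : ℝ, ∀ n, dist (φ n g * x n) (x n) ≤ C * d n := by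
    intro g
    obtain ⟨l, hl, hprod⟩ := aux8_word_list A hAgen hAsymm g
    refine ⟨l.length, ?_⟩
    subst hprod
    intro n
    induction l with
    | nil => simp
    | cons a l ih =>
      have ha : a ∈ A := hl a List.mem_cons_self
      have hl' : ∀ u ∈ l, u ∈ A := fun u hu => hl u (List.mem_cons_of_mem a hu)
      have hih := ih hl'
      have h1 : (φ n (a :: l).prod : G) * x n = φ n a * (φ n l.prod * x n) := by
        rw [List.prod_cons, map_mul, mul_assoc]
      rw [h1]
      calc dist (φ n a * (φ n l.prod * x n)) (x n)
          ≤ dist (φ n a * (φ n l.prod * x n)) (φ n a * x n)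
            + dist (φ n a * x n) (x n) := dist_triangle _ _ _
        _ = dist (φ n l.prod * x n) (x n) + dist (φ n a * x n) (x n) := by rw [hinv]
        _ ≤ (l.length : ℝ) * d n + d n := add_le_add hih (hA_le n a ha)
        _ = ((a :: l).length : ℝ) * d n := by
            simp only [List.length_cons]
            push_cast
            ring
  have hself : ∀ w : ℕ → G, coneDist ω d w w = 0 := by
    intro w
    unfold coneDist
    have h0 : (fun n => dist (w n) (w n) / d n) = fun _ => (0 : ℝ) := by
      funext n; simp
    rw [h0]
    exact Filter.Tendsto.limUnder_eq tendsto_const_nhds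
  have hkey : ∀ (g : Λ) (y z : ℕ → G),
      coneDist ω d (fun n => φ n g * y n) (fun n => φ n g * z n) = coneDist ω d y z := by
    intro g y z
    unfold coneDist
    congr 1
    funext n
    rw [hinv]
  refine ⟨?_, ?_, ?_, ?_, ?_, ?_⟩
  · -- preserves the cone
    rintro g y ⟨M, hM⟩
    obtain ⟨C, hCb⟩ := hC g
    refine ⟨M + C, ?_⟩
    filter_upwards [hM] with n hn
    calc dist (φ n g * y n) (x n)
        ≤ dist (φ n g * y n) (φ n g * x n) + dist (φ n g * x n) (x n) := dist_triangle _ _ _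
      _ = dist (y n) (x n) + dist (φ n g * x n) (x n) := by rw [hinv]
      _ ≤ M * d n + C * d n := add_le_add hn (hCb n)
      _ = (M + C) * d n := (add_mul M C (d n)).symm
  · intro g y z _ _ h0
    rw [hkey, h0]
  · intro g h y _
    have he : (fun n => φ n (g * h) * y n) = fun n => φ n g * (φ n h * y n) := by
      funext n; rw [map_mul, mul_assoc]
    rw [he]
    exact hself _
  · intro y _
    have he : (fun n => φ n 1 * y n) = y := by
      funext n; rw [map_one, one_mul]
    rw [he]
    exact hself _
  · intro g y z _ _
    exact hkey g y z
  · -- no global fixed point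
    rintro y ⟨M, hM⟩
    rcases A.eq_empty_or_nonempty with hAe | hne
    · exfalso
      have hdz : ∀ n, d n = 0 := by
        intro n
        rw [hd n]
        subst hAe
        have h0 : ∀ z : G, (⨆ a ∈ (∅ : Finset Λ), dist (φ n a * z) z) = (0 : ℝ) := by
          intro z
          have h1 : ∀ a : Λ, (⨆ _ : a ∈ (∅ : Finset Λ), dist (φ n a * z) z) = (0 : ℝ) := by
            intro a
            haveI : IsEmpty (a ∈ (∅ : Finset Λ)) := ⟨fun h => by simp at h⟩
            exact Real.iSup_of_isEmpty _
          simp only [h1]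
          exact ciSup_const
        simp only [h0]
        exact ciInf_const
      have hev : ∀ᶠ n in (ω : Filter ℕ), (1 : ℝ) ≤ d n :=
        hdiv.eventually (Filter.eventually_ge_atTop 1)
      obtain ⟨n, hn⟩ := hev.exists
      rw [hdz n] at hn
      linarith
    · -- main case: find a ∈ A realizing d n ≤ dist
      have hstep : ∀ n, ∃ a ∈ A, d n ≤ dist (φ n a * y n) (y n) := by
        intro n
        have hbb : BddBelow (Set.range fun z : G => ⨆ a ∈ A, dist (φ n a * z) z) := by
          refine ⟨0, ?_⟩
          rintro _ ⟨z, rfl⟩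
          exact aux8_biSup_nonneg A _ fun a => dist_nonneg
        have h1 : d n ≤ ⨆ a ∈ A, dist (φ n a * y n) (y n) := by
          rw [hd n]
          exact ciInf_le hbb (y n)
        obtain ⟨a, ha, hle⟩ := aux8_biSup_le_max A hne
          (fun a => dist (φ n a * y n) (y n)) (fun a => dist_nonneg)
        exact ⟨a, ha, h1.trans hle⟩
      have hunion : (⋃ a ∈ (A : Set Λ), {n | d n ≤ dist (φ n a * y n) (y n)}) ∈ ω := by
        refine Filter.mem_of_superset Filter.univ_mem ?_
        intro n _
        obtain ⟨a, ha, hle⟩ := hstep n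
        exact Set.mem_biUnion ha hle
      obtain ⟨a, ha, hmem⟩ := (Ultrafilter.finite_biUnion_mem_iff (A : Set Λ).toFinite).mp hunion
      obtain ⟨C, hCb⟩ := hC a
      have hpos : ∀ᶠ n in (ω : Filter ℕ), (0 : ℝ) < d n :=
        hdiv.eventually (Filter.eventually_gt_atTop 0)
      have hmem' : ∀ᶠ n in (ω : Filter ℕ), d n ≤ dist (φ n a * y n) (y n) := hmem
      set B : ℝ := max 1 (2 * M + C) with hB
      have hicc : ∀ᶠ n in (ω : Filter ℕ),
          dist (φ n a * y n) (y n) / d n ∈ Set.Icc (1 : ℝ) B := by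
        filter_upwards [hpos, hmem', hM] with n h1 h2 h3
        constructor
        · rw [le_div_iff₀ h1, one_mul]
          exact h2
        · rw [div_le_iff₀ h1]
          have hub : dist (φ n a * y n) (y n) ≤ (2 * M + C) * d n := by
            calc dist (φ n a * y n) (y n)
                ≤ dist (φ n a * y n) (φ n a * x n) + dist (φ n a * x n) (y n) :=
                  dist_triangle _ _ _
              _ ≤ dist (φ n a * y n) (φ n a * x n) +
                  (dist (φ n a * x n) (x n) + dist (x n) (y n)) :=
                  add_le_add_right (dist_triangle _ _ _) _
              _ = dist (y n) (x n) + (dist (φ n a * x n) (x n) + dist (y n) (x n)) := by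
                  rw [hinv, dist_comm (x n) (y n)]
              _ ≤ M * d n + (C * d n + M * d n) :=
                  add_le_add h3 (add_le_add (hCb n) h3)
              _ = (2 * M + C) * d n := by ring
          calc dist (φ n a * y n) (y n) ≤ (2 * M + C) * d n := hub
            _ ≤ B * d n := mul_le_mul_of_nonneg_right (le_max_right _ _) h1.le
      have hcone : coneDist ω d (fun n => φ n a * y n) y ∈ Set.Icc (1 : ℝ) B :=
        aux8_limUnder_mem hicc
      calc (1 : ℝ) ≤ coneDist ω d (fun n => φ n a * y n) y := hcone.1
        _ ≤ ⨆ b ∈ A, coneDist ω d (fun n => φ n b * y n) y :=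
            aux8_le_biSup A (fun b => coneDist ω d (fun n => φ n b * y n) y) ha
end

section
/- Let F be a complete geodesic metric space that is tree-graded with respect to a collection 𝒫 of pieces, and let g be an isometry of F permuting the pieces. If g fixes two distinct points x, y ∈ F (i.e. g(x) = x and g(y) = y), then g fixes pointwise the set Cutp{x,y}: g(p) = p for every p ∈ Cutp{x,y}. -/
/-- A geodesic from `x` to `y`, parametrized by arc length on the interval `[0, dist x y]`. -/
def IsGeodesicFrom {X : Type*} [MetricSpace X] (γ : ℝ → X) (x y : X) : Prop :=
  γ 0 = x ∧ γ (dist x y) = y ∧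
    ∀ s ∈ Set.Icc (0 : ℝ) (dist x y), ∀ t ∈ Set.Icc (0 : ℝ) (dist x y),
      dist (γ s) (γ t) = |s - t|

/-- A metric space is geodesic if every two points are joined by a geodesic. -/
def IsGeodesicSpace (X : Type*) [MetricSpace X] : Prop :=
  ∀ x y : X, ∃ γ : ℝ → X, IsGeodesicFrom γ x y

/-- A subset is geodesic if every two of its points are joined by a geodesic contained in it. -/
def IsGeodesicSubset {X : Type*} [MetricSpace X] (A : Set X) : Prop :=
  ∀ x ∈ A, ∀ y ∈ A, ∃ γ : ℝ → X, IsGeodesicFrom γ x y ∧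
    γ '' Set.Icc (0 : ℝ) (dist x y) ⊆ A

/-- A simple non-trivial geodesic triangle with pairwise distinct vertices `x, y, z` and
sides `γ₁, γ₂, γ₃`, any two sides meeting exactly in their common vertex. -/
def IsSimpleGeodesicTriangle {X : Type*} [MetricSpace X]
    (γ₁ γ₂ γ₃ : ℝ → X) (x y z : X) : Prop :=
  x ≠ y ∧ y ≠ z ∧ z ≠ x ∧
  IsGeodesicFrom γ₁ x y ∧ IsGeodesicFrom γ₂ y z ∧ IsGeodesicFrom γ₃ z x ∧
  (γ₁ '' Set.Icc (0 : ℝ) (dist x y)) ∩ (γ₂ '' Set.Icc (0 : ℝ) (dist y z)) = {y} ∧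
  (γ₂ '' Set.Icc (0 : ℝ) (dist y z)) ∩ (γ₃ '' Set.Icc (0 : ℝ) (dist z x)) = {z} ∧
  (γ₃ '' Set.Icc (0 : ℝ) (dist z x)) ∩ (γ₁ '' Set.Icc (0 : ℝ) (dist x y)) = {x}

/-- `𝒞` is a tree-grading of the complete geodesic metric space `X`:
a collection of closed geodesic proper subsets (pieces) covering `X` such that
(T₁) two distinct pieces meet in at most one point, and
(T₂) every simple non-trivial geodesic triangle is contained in one piece. -/
structure IsTreeGraded (X : Type*) [MetricSpace X] (𝒞 : Set (Set X)) : Prop where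
  closed : ∀ P ∈ 𝒞, IsClosed P
  geodesic : ∀ P ∈ 𝒞, IsGeodesicSubset P
  proper : ∀ P ∈ 𝒞, P ≠ Set.univ
  covers : ⋃₀ 𝒞 = Set.univ
  t1 : ∀ P ∈ 𝒞, ∀ Q ∈ 𝒞, P ≠ Q → (P ∩ Q).Subsingleton
  t2 : ∀ (γ₁ γ₂ γ₃ : ℝ → X) (x y z : X), IsSimpleGeodesicTriangle γ₁ γ₂ γ₃ x y z →
    ∃ P ∈ 𝒞, (γ₁ '' Set.Icc (0 : ℝ) (dist x y)) ∪ (γ₂ '' Set.Icc (0 : ℝ) (dist y z)) ∪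
      (γ₃ '' Set.Icc (0 : ℝ) (dist z x)) ⊆ P

/-- The set of cut-points of the arc `γ([0,d])`: the complement, in the arc, of the union of
the interiors of all subarcs arising as intersections of the arc with a single piece. -/
def cutpSet {X : Type*} [MetricSpace X] (𝒞 : Set (Set X)) (γ : ℝ → X) (d : ℝ) : Set X :=
  {p | ∃ t ∈ Set.Icc (0 : ℝ) d, γ t = p ∧
    ¬ ∃ P ∈ 𝒞, ∃ s u : ℝ, 0 ≤ s ∧ s < t ∧ t < u ∧ u ≤ d ∧
      γ '' Set.Icc s u = (γ '' Set.Icc (0 : ℝ) d) ∩ P}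

set_option linter.unusedSectionVars false
set_option linter.unusedVariables false
open Set

namespace S9

variable {X : Type*} [MetricSpace X]

lemma geo_dist {γ : ℝ → X} {x y : X} (h : IsGeodesicFrom γ x y)
    {s t : ℝ} (hs : s ∈ Icc (0:ℝ) (dist x y)) (ht : t ∈ Icc (0:ℝ) (dist x y)) :
    dist (γ s) (γ t) = |s - t| := h.2.2 s hs t ht

lemma geo_cont {γ : ℝ → X} {x y : X} (h : IsGeodesicFrom γ x y) :
    ContinuousOn γ (Icc (0:ℝ) (dist x y)) := by
  have hl : LipschitzOnWith 1 γ (Icc (0:ℝ) (dist x y)) := by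
    rw [lipschitzOnWith_iff_dist_le_mul]
    intro a ha b hb
    rw [geo_dist h ha hb, Real.dist_eq]
    simp
  exact hl.continuousOn

lemma geo_inj {γ : ℝ → X} {x y : X} (h : IsGeodesicFrom γ x y)
    {s t : ℝ} (hs : s ∈ Icc (0:ℝ) (dist x y)) (ht : t ∈ Icc (0:ℝ) (dist x y))
    (hst : γ s = γ t) : s = t := by
  have h1 := geo_dist h hs ht
  rw [hst, dist_self] at h1
  have := abs_eq_zero.mp h1.symm
  linarith [abs_nonneg (s - t), this]

lemma geo_sub {γ : ℝ → X} {x y : X} (h : IsGeodesicFrom γ x y) {a b : ℝ}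
    (ha : 0 ≤ a) (hab : a ≤ b) (hb : b ≤ dist x y) :
    dist (γ a) (γ b) = b - a ∧ IsGeodesicFrom (fun s => γ (a + s)) (γ a) (γ b) := by
  have hd : dist (γ a) (γ b) = b - a := by
    rw [geo_dist h ⟨ha, le_trans hab hb⟩ ⟨le_trans ha hab, hb⟩,
      abs_of_nonpos (by linarith)]
    ring
  refine ⟨hd, by show γ (a + 0) = γ a; rw [add_zero], ?_, ?_⟩
  · rw [hd]
    show γ (a + (b - a)) = γ b
    rw [show a + (b - a) = b by ring]
  · intro s hs t ht
    rw [hd] at hs ht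
    show dist (γ (a + s)) (γ (a + t)) = |s - t|
    rw [geo_dist h ⟨by linarith [hs.1], by linarith [hs.2]⟩
      ⟨by linarith [ht.1], by linarith [ht.2]⟩]
    congr 1; ring

lemma image_shift (γ : ℝ → X) (a b : ℝ) :
    (fun s => γ (a + s)) '' Icc 0 (b - a) = γ '' Icc a b := by
  ext z
  constructor
  · rintro ⟨s, hs, rfl⟩
    exact ⟨a + s, ⟨by linarith [hs.1], by linarith [hs.2]⟩, rfl⟩
  · rintro ⟨w, hw, rfl⟩
    exact ⟨w - a, ⟨by linarith [hw.1], by linarith [hw.2]⟩,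
      congrArg γ (by ring)⟩

lemma geo_rev {γ : ℝ → X} {x y : X} (h : IsGeodesicFrom γ x y) :
    IsGeodesicFrom (fun s => γ (dist x y - s)) y x := by
  have hyx : dist y x = dist x y := dist_comm y x
  refine ⟨by show γ (dist x y - 0) = y; rw [sub_zero]; exact h.2.1, ?_, ?_⟩
  · rw [hyx]
    show γ (dist x y - dist x y) = x
    rw [sub_self]; exact h.1
  · intro s hs t ht
    rw [hyx] at hs ht
    show dist (γ (dist x y - s)) (γ (dist x y - t)) = |s - t|
    rw [geo_dist h ⟨by linarith [hs.2], by linarith [hs.1]⟩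
      ⟨by linarith [ht.2], by linarith [ht.1]⟩]
    rw [abs_sub_comm]
    congr 1; ring

lemma image_rev (γ : ℝ → X) (D : ℝ) (hD : 0 ≤ D) :
    (fun s => γ (D - s)) '' Icc 0 D = γ '' Icc 0 D := by
  ext z
  constructor
  · rintro ⟨s, hs, rfl⟩
    exact ⟨D - s, ⟨by linarith [hs.2], by linarith [hs.1]⟩, rfl⟩
  · rintro ⟨w, hw, rfl⟩
    exact ⟨D - w, ⟨by linarith [hw.2], by linarith [hw.1]⟩,
      congrArg γ (by ring)⟩


lemma bigon (𝒞 : Set (Set X)) (htg : IsTreeGraded X 𝒞)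
    {γ δ : ℝ → X} {p q : X} (hpq : p ≠ q)
    (hγ : IsGeodesicFrom γ p q) (hδ : IsGeodesicFrom δ p q)
    (hint : (γ '' Icc (0:ℝ) (dist p q)) ∩ (δ '' Icc (0:ℝ) (dist p q)) ⊆ {p, q}) :
    ∃ P ∈ 𝒞, γ '' Icc (0:ℝ) (dist p q) ∪ δ '' Icc (0:ℝ) (dist p q) ⊆ P := by
  set D := dist p q with hDdef
  have hD : 0 < D := dist_pos.mpr hpq
  set m := D / 2 with hmdef
  have hm0 : 0 ≤ m := by positivity
  have hmD : m ≤ D := by rw [hmdef]; linarith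
  set z := γ m with hzdef
  have hdpz : dist p z = m := by
    rw [← hγ.1, hzdef, geo_dist hγ ⟨le_refl 0, le_of_lt hD⟩ ⟨hm0, hmD⟩,
      abs_of_nonpos (by linarith)]
    ring
  have hdzq : dist z q = D - m := by
    rw [← hγ.2.1, hzdef, geo_dist hγ ⟨hm0, hmD⟩ ⟨le_of_lt hD, le_refl D⟩,
      abs_of_nonpos (by linarith)]
    ring
  have hdqp : dist q p = D := by rw [dist_comm]
  have hγ1 : IsGeodesicFrom γ p z := by
    refine ⟨hγ.1, by rw [hdpz], ?_⟩
    intro s hs t ht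
    rw [hdpz] at hs ht
    exact geo_dist hγ ⟨hs.1, le_trans hs.2 hmD⟩ ⟨ht.1, le_trans ht.2 hmD⟩
  have hγ2 : IsGeodesicFrom (fun s => γ (m + s)) z q := by
    have h := (geo_sub hγ hm0 hmD (le_refl D)).2
    rw [hγ.2.1] at h
    exact h
  have hγ3 : IsGeodesicFrom (fun s => δ (D - s)) q p := geo_rev hδ
  have e1 : γ '' Icc (0:ℝ) (dist p z) = γ '' Icc 0 m := by rw [hdpz]
  have e2 : (fun s => γ (m + s)) '' Icc (0:ℝ) (dist z q) = γ '' Icc m D := by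
    rw [hdzq, image_shift]
  have e3 : (fun s => δ (D - s)) '' Icc (0:ℝ) (dist q p) = δ '' Icc 0 D := by
    rw [hdqp, image_rev δ D (le_of_lt hD)]
  have hz_mem : z ∈ γ '' Icc 0 m := ⟨m, ⟨hm0, le_refl m⟩, rfl⟩
  have hz_mem2 : z ∈ γ '' Icc m D := ⟨m, ⟨le_refl m, hmD⟩, rfl⟩
  have hq_mem : q ∈ γ '' Icc m D := ⟨D, ⟨hmD, le_refl D⟩, hγ.2.1⟩
  have hq_mem' : q ∈ δ '' Icc 0 D := ⟨D, ⟨le_of_lt hD, le_refl D⟩, hδ.2.1⟩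
  have hp_mem : p ∈ γ '' Icc 0 m := ⟨0, ⟨le_refl 0, hm0⟩, hγ.1⟩
  have hp_mem' : p ∈ δ '' Icc 0 D := ⟨0, ⟨le_refl 0, le_of_lt hD⟩, hδ.1⟩
  have htri : IsSimpleGeodesicTriangle γ (fun s => γ (m + s)) (fun s => δ (D - s)) p z q := by
    refine ⟨?_, ?_, hpq.symm, hγ1, hγ2, hγ3, ?_, ?_, ?_⟩
    · intro h
      have hm : m = 0 := by rw [← hdpz, h, dist_self]
      rw [hmdef] at hm; linarith
    · intro h
      have hm : D - m = 0 := by rw [← hdzq, h, dist_self]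
      rw [hmdef] at hm; linarith
    · rw [e1, e2]
      apply Subset.antisymm
      · rintro w ⟨⟨s, hs, rfl⟩, ⟨t, ht, hw⟩⟩
        have hst : t = s := geo_inj hγ ⟨le_trans hm0 ht.1, ht.2⟩
          ⟨hs.1, le_trans hs.2 hmD⟩ hw
        have hsm : s = m := le_antisymm hs.2 (hst ▸ ht.1)
        rw [mem_singleton_iff, hsm, hzdef]
      · rintro w hw
        rw [mem_singleton_iff] at hw
        subst hw
        exact ⟨hz_mem, hz_mem2⟩
    · rw [e2, e3]
      apply Subset.antisymm
      · rintro w ⟨⟨s, hs, rfl⟩, hwδ⟩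
        have hw2 : γ s ∈ γ '' Icc (0:ℝ) D ∩ δ '' Icc (0:ℝ) D :=
          ⟨⟨s, ⟨le_trans hm0 hs.1, hs.2⟩, rfl⟩, hwδ⟩
        rcases hint hw2 with h | h
        · exfalso
          have hs0 : s = 0 := geo_inj hγ ⟨le_trans hm0 hs.1, hs.2⟩
            ⟨le_refl 0, le_of_lt hD⟩ (h.trans hγ.1.symm)
          have hms := hs.1
          rw [hs0] at hms
          rw [hmdef] at hms; linarith
        · exact h
      · rintro w hw
        rw [mem_singleton_iff] at hw
        subst hw
        exact ⟨hq_mem, hq_mem'⟩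
    · rw [e1, e3]
      apply Subset.antisymm
      · rintro w ⟨hwδ, ⟨s, hs, rfl⟩⟩
        have hw2 : γ s ∈ γ '' Icc (0:ℝ) D ∩ δ '' Icc (0:ℝ) D :=
          ⟨⟨s, ⟨hs.1, le_trans hs.2 hmD⟩, rfl⟩, hwδ⟩
        rcases hint hw2 with h | h
        · rw [mem_singleton_iff]; exact h
        · exfalso
          rw [mem_singleton_iff] at h
          have hsD : s = D := geo_inj hγ ⟨hs.1, le_trans hs.2 hmD⟩
            ⟨le_of_lt hD, le_refl D⟩ (h.trans hγ.2.1.symm)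
          have hms := hs.2
          rw [hsD, hmdef] at hms; linarith
      · rintro w hw
        rw [mem_singleton_iff] at hw
        subst hw
        exact ⟨hp_mem', hp_mem⟩
  obtain ⟨P, hP, hsub⟩ := htg.t2 _ _ _ p z q htri
  rw [e1, e2, e3] at hsub
  refine ⟨P, hP, ?_⟩
  intro w hw
  rcases hw with hw | hw
  · obtain ⟨s, hs, rfl⟩ := hw
    by_cases hsm : s ≤ m
    · exact hsub (Or.inl (Or.inl ⟨s, ⟨hs.1, hsm⟩, rfl⟩))
    · exact hsub (Or.inl (Or.inr ⟨s, ⟨le_of_not_ge hsm, hs.2⟩, rfl⟩))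
  · exact hsub (Or.inr hw)

lemma piece_convex (𝒞 : Set (Set X)) (htg : IsTreeGraded X 𝒞)
    {γ : ℝ → X} {x y : X} (hγ : IsGeodesicFrom γ x y)
    {P : Set X} (hP : P ∈ 𝒞) {s u r : ℝ}
    (hs : s ∈ Icc (0:ℝ) (dist x y)) (hu : u ∈ Icc (0:ℝ) (dist x y))
    (hγs : γ s ∈ P) (hγu : γ u ∈ P) (hr : r ∈ Icc s u) : γ r ∈ P := by
  by_contra hrP
  set d := dist x y with hddef
  have hsr : s ≤ r := hr.1
  have hru : r ≤ u := hr.2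
  have hr0 : r ∈ Icc (0:ℝ) d := ⟨le_trans hs.1 hsr, le_trans hru hu.2⟩
  set E1 : Set ℝ := Icc s r ∩ γ ⁻¹' P with hE1
  have hE1closed : IsClosed E1 := by
    refine ContinuousOn.preimage_isClosed_of_isClosed ?_ isClosed_Icc (htg.closed P hP)
    exact (geo_cont hγ).mono (Icc_subset_Icc hs.1 hr0.2)
  have hE1ne : E1.Nonempty := ⟨s, ⟨le_refl s, hsr⟩, hγs⟩
  have hE1bdd : BddAbove E1 := BddAbove.mono inter_subset_left bddAbove_Icc
  set a := sSup E1 with hadef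
  have haE : a ∈ E1 := hE1closed.csSup_mem hE1ne hE1bdd
  have har : a < r := lt_of_le_of_ne haE.1.2 (fun h => hrP (by rw [← h]; exact haE.2))
  set E2 : Set ℝ := Icc r u ∩ γ ⁻¹' P with hE2
  have hE2closed : IsClosed E2 := by
    refine ContinuousOn.preimage_isClosed_of_isClosed ?_ isClosed_Icc (htg.closed P hP)
    exact (geo_cont hγ).mono (Icc_subset_Icc hr0.1 hu.2)
  have hE2ne : E2.Nonempty := ⟨u, ⟨hru, le_refl u⟩, hγu⟩
  have hE2bdd : BddBelow E2 := BddBelow.mono inter_subset_left bddBelow_Icc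
  set b := sInf E2 with hbdef
  have hbE : b ∈ E2 := hE2closed.csInf_mem hE2ne hE2bdd
  have hrb : r < b := lt_of_le_of_ne hbE.1.1 (fun h => hrP (by rw [h]; exact hbE.2))
  have hgap : ∀ w, a < w → w < b → γ w ∉ P := by
    intro w hw1 hw2 hwP
    by_cases hwr : w ≤ r
    · have hwE : w ∈ E1 := ⟨⟨le_trans haE.1.1 (le_of_lt hw1), hwr⟩, hwP⟩
      exact absurd (le_csSup hE1bdd hwE) (not_le.mpr hw1)
    · have hwE : w ∈ E2 := ⟨⟨le_of_not_ge hwr, le_trans (le_of_lt hw2) hbE.1.2⟩, hwP⟩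
      exact absurd (csInf_le hE2bdd hwE) (not_le.mpr hw2)
  have hab : a < b := lt_trans har hrb
  have ha0 : a ∈ Icc (0:ℝ) d := ⟨le_trans hs.1 haE.1.1, le_trans haE.1.2 hr0.2⟩
  have hb0 : b ∈ Icc (0:ℝ) d := ⟨le_trans hr0.1 hbE.1.1, le_trans hbE.1.2 hu.2⟩
  obtain ⟨hdab, hγab⟩ := geo_sub hγ ha0.1 (le_of_lt hab) hb0.2
  have hne : γ a ≠ γ b := fun h => absurd (geo_inj hγ ha0 hb0 h) (ne_of_lt hab)
  obtain ⟨δ, hδ, hδP⟩ := htg.geodesic P hP (γ a) haE.2 (γ b) hbE.2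
  have hint : ((fun s' => γ (a + s')) '' Icc (0:ℝ) (dist (γ a) (γ b))) ∩
      (δ '' Icc (0:ℝ) (dist (γ a) (γ b))) ⊆ {γ a, γ b} := by
    rintro w ⟨⟨s', hs', rfl⟩, hwδ⟩
    rw [hdab] at hs'
    have hwP : γ (a + s') ∈ P := hδP hwδ
    have hw1 : a ≤ a + s' := by linarith [hs'.1]
    have hw2 : a + s' ≤ b := by linarith [hs'.2]
    rw [mem_insert_iff, mem_singleton_iff]
    rcases eq_or_lt_of_le hw1 with h1 | h1
    · exact Or.inl (congrArg γ h1.symm)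
    rcases eq_or_lt_of_le hw2 with h2 | h2
    · exact Or.inr (congrArg γ h2)
    exact absurd hwP (hgap _ h1 h2)
  obtain ⟨Q, hQ, hQsub⟩ := bigon 𝒞 htg hne hγab hδ hint
  by_cases hQP : Q = P
  · subst hQP
    apply hrP
    apply hQsub
    left
    rw [hdab, image_shift]
    exact ⟨r, ⟨le_of_lt har, le_of_lt hrb⟩, rfl⟩
  · have hsub := htg.t1 P hP Q hQ (Ne.symm hQP)
    have h1 : γ a ∈ P ∩ Q := ⟨haE.2, hQsub (Or.inl ⟨0, ⟨le_refl 0, by rw [hdab]; linarith⟩,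
      by show γ (a + 0) = γ a; rw [add_zero]⟩)⟩
    have h2 : γ b ∈ P ∩ Q := ⟨hbE.2, hQsub (Or.inl ⟨b - a, ⟨by linarith, by rw [hdab]⟩,
      by show γ (a + (b - a)) = γ b; rw [show a + (b - a) = b by ring]⟩)⟩
    exact hne (hsub h1 h2)

end S9

/-- Let `X` be a complete geodesic metric space tree-graded with respect to
`𝒞`, and let `g` be an isometry of `X` permuting the pieces. If `g` fixes two distinct points
`x` and `y`, then `g` fixes pointwise the set `Cutp{x,y}` (computed along any geodesic from
`x` to `y`). -/
theorem statement9 {X : Type*} [MetricSpace X] [CompleteSpace X]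
    (hgeo : IsGeodesicSpace X) (𝒞 : Set (Set X)) (htg : IsTreeGraded X 𝒞)
    (g : X ≃ᵢ X) (hperm : ∀ P ∈ 𝒞, g '' P ∈ 𝒞)
    (x y : X) (hxy : x ≠ y) (hgx : g x = x) (hgy : g y = y) :
    ∀ γ : ℝ → X, IsGeodesicFrom γ x y →
      ∀ p ∈ cutpSet 𝒞 γ (dist x y), g p = p := by
  intro γ hγ p hp
  obtain ⟨t, ht, hγt, hnot⟩ := hp
  by_contra hne
  set d := dist x y with hddef
  have hd0 : (0:ℝ) ≤ d := dist_nonneg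
  set δ : ℝ → X := fun s => g (γ s) with hδdef
  have hδ : IsGeodesicFrom δ x y := by
    refine ⟨?_, ?_, ?_⟩
    · show g (γ 0) = x; rw [hγ.1, hgx]
    · show g (γ d) = y; rw [hγ.2.1, hgy]
    · intro s hs t' ht'
      show dist (g (γ s)) (g (γ t')) = |s - t'|
      rw [g.dist_eq]
      exact S9.geo_dist hγ hs ht'
  set E : Set ℝ := Icc 0 d ∩ {w | γ w = δ w} with hEdef
  have hEclosed : IsClosed E := by
    have hEeq : E = Icc 0 d ∩ (fun w => dist (γ w) (δ w)) ⁻¹' {0} := by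
      ext w
      simp only [hEdef, mem_inter_iff, mem_setOf_eq, mem_preimage, mem_singleton_iff,
        dist_eq_zero]
    rw [hEeq]
    refine ContinuousOn.preimage_isClosed_of_isClosed ?_ isClosed_Icc isClosed_singleton
    exact continuous_dist.comp_continuousOn ((S9.geo_cont hγ).prodMk (S9.geo_cont hδ))
  have h0E : (0:ℝ) ∈ E := ⟨⟨le_refl 0, hd0⟩, by show γ 0 = g (γ 0); rw [hγ.1, hgx]⟩
  have hdE : d ∈ E := ⟨⟨hd0, le_refl d⟩, by show γ d = g (γ d); rw [hγ.2.1, hgy]⟩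
  have htE : t ∉ E := by
    intro h
    apply hne
    rw [← hγt]
    exact h.2.symm
  set a := sSup (E ∩ Icc 0 t) with hadef
  have hE1closed : IsClosed (E ∩ Icc 0 t) := hEclosed.inter isClosed_Icc
  have hE1ne : (E ∩ Icc 0 t).Nonempty := ⟨0, h0E, le_refl 0, ht.1⟩
  have hE1bdd : BddAbove (E ∩ Icc 0 t) := BddAbove.mono inter_subset_right bddAbove_Icc
  have haE : a ∈ E ∩ Icc 0 t := hE1closed.csSup_mem hE1ne hE1bdd
  have hat : a < t := lt_of_le_of_ne haE.2.2 (fun h => htE (by rw [← h]; exact haE.1))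
  set b := sInf (E ∩ Icc t d) with hbdef
  have hE2closed : IsClosed (E ∩ Icc t d) := hEclosed.inter isClosed_Icc
  have hE2ne : (E ∩ Icc t d).Nonempty := ⟨d, hdE, ht.2, le_refl d⟩
  have hE2bdd : BddBelow (E ∩ Icc t d) := BddBelow.mono inter_subset_right bddBelow_Icc
  have hbE : b ∈ E ∩ Icc t d := hE2closed.csInf_mem hE2ne hE2bdd
  have htb : t < b := lt_of_le_of_ne hbE.2.1 (fun h => htE (by rw [h]; exact hbE.1))
  have hgap : ∀ w, a < w → w < b → γ w ≠ δ w := by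
    intro w h1 h2 hw
    have hw0 : w ∈ Icc (0:ℝ) d :=
      ⟨le_trans haE.1.1.1 (le_of_lt h1), le_trans (le_of_lt h2) hbE.1.1.2⟩
    by_cases hwt : w ≤ t
    · exact absurd (le_csSup hE1bdd ⟨⟨hw0, hw⟩, ⟨hw0.1, hwt⟩⟩) (not_le.mpr h1)
    · exact absurd (csInf_le hE2bdd ⟨⟨hw0, hw⟩, ⟨le_of_not_ge hwt, hw0.2⟩⟩) (not_le.mpr h2)
  have ha0 : a ∈ Icc (0:ℝ) d := haE.1.1
  have hb0 : b ∈ Icc (0:ℝ) d := hbE.1.1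
  have hab : a < b := lt_trans hat htb
  obtain ⟨hdab, hγab⟩ := S9.geo_sub hγ ha0.1 (le_of_lt hab) hb0.2
  have hneab : γ a ≠ γ b := fun h => absurd (S9.geo_inj hγ ha0 hb0 h) (ne_of_lt hab)
  have hga : γ a = δ a := haE.1.2
  have hgb : γ b = δ b := hbE.1.2
  have hδab : IsGeodesicFrom (fun s => δ (a + s)) (γ a) (γ b) := by
    have h := (S9.geo_sub hδ ha0.1 (le_of_lt hab) hb0.2).2
    rw [← hga, ← hgb] at h
    exact h
  have hint : ((fun s => γ (a + s)) '' Icc (0:ℝ) (dist (γ a) (γ b))) ∩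
      ((fun s => δ (a + s)) '' Icc (0:ℝ) (dist (γ a) (γ b))) ⊆ {γ a, γ b} := by
    rintro w ⟨⟨s, hs, rfl⟩, ⟨s', hs', hw⟩⟩
    rw [hdab] at hs hs'
    have hw' : δ (a + s') = γ (a + s) := hw
    show γ (a + s) ∈ {γ a, γ b}
    have hm1 : a + s ∈ Icc (0:ℝ) d := ⟨by linarith [ha0.1, hs.1], by linarith [hb0.2, hs.2]⟩
    have hm2 : a + s' ∈ Icc (0:ℝ) d := ⟨by linarith [ha0.1, hs'.1], by linarith [hb0.2, hs'.2]⟩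
    have h0m : (0:ℝ) ∈ Icc (0:ℝ) d := ⟨le_refl 0, hd0⟩
    have hd1 : dist x (γ (a + s)) = a + s := by
      rw [← hγ.1, S9.geo_dist hγ h0m hm1, zero_sub, abs_neg,
        abs_of_nonneg (by linarith [hm1.1])]
    have hd2 : dist x (δ (a + s')) = a + s' := by
      rw [← hδ.1, S9.geo_dist hδ h0m hm2, zero_sub, abs_neg,
        abs_of_nonneg (by linarith [hm2.1])]
    rw [hw'] at hd2
    have hss' : s = s' := by linarith
    have hagree : γ (a + s) = δ (a + s) := by rw [← hw', hss']
    rw [mem_insert_iff, mem_singleton_iff]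
    rcases eq_or_lt_of_le (show a ≤ a + s by linarith [hs.1]) with h1 | h1
    · exact Or.inl (congrArg γ h1.symm)
    rcases eq_or_lt_of_le (show a + s ≤ b by linarith [hs.2]) with h2 | h2
    · exact Or.inr (congrArg γ h2)
    exact absurd hagree (hgap _ h1 h2)
  obtain ⟨Q, hQ, hQsub⟩ := S9.bigon 𝒞 htg hneab hγab hδab hint
  have hQγ : γ '' Icc a b ⊆ Q := by
    intro w hw
    apply hQsub
    left
    rw [hdab, S9.image_shift]
    exact hw
  set AQ : Set ℝ := Icc 0 d ∩ γ ⁻¹' Q with hAQ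
  have hAQclosed : IsClosed AQ :=
    ContinuousOn.preimage_isClosed_of_isClosed (S9.geo_cont hγ) isClosed_Icc (htg.closed Q hQ)
  have haAQ : a ∈ AQ := ⟨ha0, hQγ ⟨a, ⟨le_refl a, le_of_lt hab⟩, rfl⟩⟩
  have hbAQ : b ∈ AQ := ⟨hb0, hQγ ⟨b, ⟨le_of_lt hab, le_refl b⟩, rfl⟩⟩
  have hAQbddA : BddAbove AQ := BddAbove.mono inter_subset_left bddAbove_Icc
  have hAQbddB : BddBelow AQ := BddBelow.mono inter_subset_left bddBelow_Icc
  have hAQne : AQ.Nonempty := ⟨a, haAQ⟩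
  set s0 := sInf AQ with hs0def
  set u0 := sSup AQ with hu0def
  have hs0 : s0 ∈ AQ := hAQclosed.csInf_mem hAQne hAQbddB
  have hu0 : u0 ∈ AQ := hAQclosed.csSup_mem hAQne hAQbddA
  apply hnot
  refine ⟨Q, hQ, s0, u0, hs0.1.1, lt_of_le_of_lt (csInf_le hAQbddB haAQ) hat,
    lt_of_lt_of_le htb (le_csSup hAQbddA hbAQ), hu0.1.2, ?_⟩
  apply Subset.antisymm
  · rintro w ⟨r, hr, rfl⟩
    have hrQ : γ r ∈ Q := S9.piece_convex 𝒞 htg hγ hQ hs0.1 hu0.1 hs0.2 hu0.2 hr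
    exact ⟨⟨r, ⟨le_trans hs0.1.1 hr.1, le_trans hr.2 hu0.1.2⟩, rfl⟩, hrQ⟩
  · rintro w ⟨⟨r, hr, rfl⟩, hwQ⟩
    have hrA : r ∈ AQ := ⟨hr, hwQ⟩
    exact ⟨r, ⟨csInf_le hAQbddB hrA, le_csSup hAQbddA hrA⟩, rfl⟩
end
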